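/- Let A be a positive semidefinite n×n complex matrix and B a Hermitian n×n matrix with −A ≤ B ≤ A. Then B is logarithmically submajorised by A: for every 1 ≤ k ≤ n, the product of the k largest singular values of B is at most the product of the k largest singular values of A. -/

import Mathlib

open ComplexOrder

open Matrix in
private lemma dot_self_eig {k : ℕ} {M : Matrix (Fin k) (Fin k) ℂ} (hM : M.IsHermitian)
    (i : Fin k) : star ⇑(hM.eigenvectorBasis i) ⬝ᵥ ⇑(hM.eigenvectorBasis i) = 1 := by
  have h2 := hM.eigenvectorBasis.orthonormal.1 i
  have h3 : (inner ℂ (hM.eigenvectorBasis i) (hM.eigenvectorBasis i) : ℂ) = 1 := by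
    rw [inner_self_eq_norm_sq_to_K, h2]; norm_num
  rw [← h3, PiLp.inner_apply]
  simp [dotProduct, mul_comm]
  exact Finset.sum_congr rfl fun x _ => by
    rw [Complex.mul_conj, Complex.normSq_eq_norm_sq, Complex.ofReal_pow]

open Matrix in
/-- quadratic form at an eigenvector gives the eigenvalue. -/
private lemma quad_eig {k : ℕ} {M : Matrix (Fin k) (Fin k) ℂ} (hM : M.IsHermitian)
    (i : Fin k) :
    star ⇑(hM.eigenvectorBasis i) ⬝ᵥ (M *ᵥ ⇑(hM.eigenvectorBasis i))
      = (hM.eigenvalues i : ℂ) := by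
  rw [hM.mulVec_eigenvectorBasis]
  rw [show ((hM.eigenvalues i : ℝ) • ⇑(hM.eigenvectorBasis i))
      = (fun x => (hM.eigenvalues i : ℂ) * x) ∘ ⇑(hM.eigenvectorBasis i) by
    funext x; simp [RCLike.real_smul_eq_coe_mul]]
  have := dot_self_eig hM i
  simp only [dotProduct, Function.comp_apply, Pi.star_apply] at *
  calc ∑ x : Fin k, star ((WithLp.equiv 2 (Fin k → ℂ)) (hM.eigenvectorBasis i) x) *
        ((hM.eigenvalues i : ℂ) * (WithLp.equiv 2 (Fin k → ℂ)) (hM.eigenvectorBasis i) x)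
      = (hM.eigenvalues i : ℂ) * ∑ x : Fin k,
          star ((WithLp.equiv 2 (Fin k → ℂ)) (hM.eigenvectorBasis i) x) *
          ((WithLp.equiv 2 (Fin k → ℂ)) (hM.eigenvectorBasis i) x) := by
        rw [Finset.mul_sum]; congr 1; funext x; ring
    _ = (hM.eigenvalues i : ℂ) := (congrArg (fun z => (hM.eigenvalues i : ℂ) * z) this).trans (mul_one _)

open Matrix in
private lemma le_eig {k : ℕ} {M : Matrix (Fin k) (Fin k) ℂ} (hM : M.IsHermitian) {c : ℝ}
    (h : (M - (c : ℂ) • 1).PosSemidef) (i : Fin k) : c ≤ hM.eigenvalues i := by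
  have hq := h.dotProduct_mulVec_nonneg ⇑(hM.eigenvectorBasis i)
  rw [Matrix.sub_mulVec, dotProduct_sub, quad_eig hM i] at hq
  have h1 : star ⇑(hM.eigenvectorBasis i) ⬝ᵥ (((c : ℂ) • 1) *ᵥ ⇑(hM.eigenvectorBasis i))
      = (c : ℂ) := by
    rw [Matrix.smul_mulVec, Matrix.one_mulVec, dotProduct_smul,
      dot_self_eig hM i, smul_eq_mul, mul_one]
  rw [h1] at hq
  have : (0:ℝ) ≤ hM.eigenvalues i - c := by
    have := hq
    rw [show ((hM.eigenvalues i : ℂ) - (c:ℂ)) = ((hM.eigenvalues i - c : ℝ) : ℂ) by push_cast; ring] at this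
    exact_mod_cast this
  linarith

open Matrix in
private lemma eig_le {k : ℕ} {M : Matrix (Fin k) (Fin k) ℂ} (hM : M.IsHermitian) {c : ℝ}
    (h : ((c : ℂ) • 1 - M).PosSemidef) (i : Fin k) : hM.eigenvalues i ≤ c := by
  have hq := h.dotProduct_mulVec_nonneg ⇑(hM.eigenvectorBasis i)
  rw [Matrix.sub_mulVec, dotProduct_sub, quad_eig hM i] at hq
  have h1 : star ⇑(hM.eigenvectorBasis i) ⬝ᵥ (((c : ℂ) • 1) *ᵥ ⇑(hM.eigenvectorBasis i))
      = (c : ℂ) := by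
    rw [Matrix.smul_mulVec, Matrix.one_mulVec, dotProduct_smul,
      dot_self_eig hM i, smul_eq_mul, mul_one]
  rw [h1] at hq
  have : (0:ℝ) ≤ c - hM.eigenvalues i := by
    rw [show ((c:ℂ) - (hM.eigenvalues i : ℂ)) = ((c - hM.eigenvalues i : ℝ) : ℂ) by
      push_cast; ring] at hq
    exact_mod_cast hq
  linarith

open Matrix in
/-- `|det|` is monotone along the Loewner order on PSD matrices. -/
private lemma abs_det_mono {k : ℕ} {P Q : Matrix (Fin k) (Fin k) ℂ} (hP : P.PosSemidef)
    (hQP : (Q - P).PosSemidef) : ‖P.det‖ ≤ ‖Q.det‖ := by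
  by_cases hd : P.det = 0
  · simp [hd]
  -- S := sqrt of P is invertible
  obtain ⟨S, hSH, hS2⟩ : ∃ S : Matrix (Fin k) (Fin k) ℂ, S.IsHermitian ∧ S * S = P :=
    by open scoped MatrixOrder in exact ⟨CFC.sqrt P, (CFC.sqrt_nonneg P).posSemidef.1, CFC.sqrt_mul_sqrt_self P hP.nonneg⟩
  have hdS : IsUnit S.det := by
    rw [isUnit_iff_ne_zero]
    intro h0
    exact hd (by rw [← hS2, Matrix.det_mul, h0, zero_mul])
  have hinv1 : S⁻¹ * S = 1 := Matrix.nonsing_inv_mul S hdS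
  have hinv2 : S * S⁻¹ = 1 := Matrix.mul_nonsing_inv S hdS
  have hSinvH : (S⁻¹)ᴴ = S⁻¹ := by
    rw [Matrix.conjTranspose_nonsing_inv, hSH.eq]
  set X := S⁻¹ * Q * S⁻¹ with hXdef
  have hPid : S⁻¹ * P * S⁻¹ = 1 := by
    rw [← hS2, show S⁻¹ * (S * S) * S⁻¹ = (S⁻¹ * S) * (S * S⁻¹) by
      simp only [Matrix.mul_assoc], hinv1, hinv2, one_mul]
  have hX1 : X - 1 = S⁻¹ * (Q - P) * S⁻¹ := by
    rw [Matrix.mul_sub, Matrix.sub_mul, hPid]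
  have hXpsd : (X - 1).PosSemidef := by
    rw [hX1]
    nth_rewrite 1 [← hSinvH]
    exact hQP.conjTranspose_mul_mul_same _
  have hXH : X.IsHermitian := by
    have h1 : (X - 1).IsHermitian := hXpsd.1
    have h2 : X = (X - 1) + 1 := by rw [sub_add_cancel]
    rw [h2]
    exact h1.add Matrix.isHermitian_one
  have heig : ∀ i, 1 ≤ hXH.eigenvalues i := by
    intro i
    refine le_eig hXH ?_ i
    rw [show ((1:ℝ):ℂ) • (1 : Matrix (Fin k) (Fin k) ℂ) = 1 by norm_num]
    exact hXpsd
  have hdetX : 1 ≤ ‖X.det‖ := by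
    rw [hXH.det_eq_prod_eigenvalues, norm_prod]
    calc (1:ℝ) = ∏ _i : Fin k, 1 := by rw [Finset.prod_const_one]
      _ ≤ ∏ i, ‖((hXH.eigenvalues i : ℂ))‖ := by
          refine Finset.prod_le_prod (fun _ _ => zero_le_one) fun i _ => ?_
          rw [Complex.norm_real, Real.norm_eq_abs]
          have := heig i; rw [abs_of_pos (by linarith)]; linarith
  have hQ : Q = S * X * S := by
    rw [hXdef, show S * (S⁻¹ * Q * S⁻¹) * S = (S * S⁻¹) * Q * (S⁻¹ * S) by
      simp only [Matrix.mul_assoc], hinv1, hinv2, one_mul, mul_one]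
  have hPdet : ‖P.det‖ = ‖S.det‖ * ‖S.det‖ := by
    rw [← norm_mul, ← Matrix.det_mul, hS2]
  rw [hQ, Matrix.det_mul, Matrix.det_mul, norm_mul, norm_mul, hPdet]
  have h0 : (0:ℝ) ≤ ‖S.det‖ := norm_nonneg _
  nlinarith

open Matrix in
private lemma abs_det_le_one {k : ℕ} {C : Matrix (Fin k) (Fin k) ℂ} (hC : C.IsHermitian)
    (h1 : (1 - C).PosSemidef) (h2 : (1 + C).PosSemidef) : ‖C.det‖ ≤ 1 := by
  have hle : ∀ i, hC.eigenvalues i ≤ 1 := by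
    intro i
    refine eig_le hC ?_ i
    rw [show ((1:ℝ):ℂ) • (1 : Matrix (Fin k) (Fin k) ℂ) = 1 by norm_num]
    exact h1
  have hge : ∀ i, -1 ≤ hC.eigenvalues i := by
    intro i
    refine le_eig hC ?_ i
    have : C - ((-1:ℝ):ℂ) • 1 = 1 + C := by push_cast; module
    rw [this]
    exact h2
  rw [hC.det_eq_prod_eigenvalues, norm_prod]
  refine Finset.prod_le_one (fun i _ => norm_nonneg _) fun i _ => ?_
  show ‖((hC.eigenvalues i : ℝ) : ℂ)‖ ≤ 1
  rw [Complex.norm_real, Real.norm_eq_abs]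
  exact abs_le.mpr ⟨hge i, hle i⟩

open Matrix in
/-- determinant inequality: `-A ≤ B ≤ A` with `A ⪰ 0` gives `|det B| ≤ |det A|`. -/
private lemma abs_det_le_abs_det {k : ℕ} {A B : Matrix (Fin k) (Fin k) ℂ}
    (hA : A.PosSemidef) (h1 : (A - B).PosSemidef) (h2 : (A + B).PosSemidef) :
    ‖B.det‖ ≤ ‖A.det‖ := by
  by_cases hd : A.det = 0
  · obtain ⟨x, hx0, hAx⟩ := Matrix.exists_mulVec_eq_zero_iff.mpr hd
    have q1 := h1.dotProduct_mulVec_nonneg x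
    have q2 := h2.dotProduct_mulVec_nonneg x
    rw [Matrix.sub_mulVec, hAx, zero_sub, dotProduct_neg] at q1
    rw [Matrix.add_mulVec, hAx, zero_add] at q2
    have hz : star x ⬝ᵥ B *ᵥ x = 0 := le_antisymm (by simpa using neg_nonneg.mp (by simpa using q1)) q2
    have hz2 : star x ⬝ᵥ (A - B) *ᵥ x = 0 := by
      rw [Matrix.sub_mulVec, hAx, zero_sub, dotProduct_neg, hz, neg_zero]
    have hABx := (h1.dotProduct_mulVec_zero_iff x).mp hz2
    rw [Matrix.sub_mulVec, hAx, zero_sub, neg_eq_zero] at hABx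
    have : B.det = 0 := Matrix.exists_mulVec_eq_zero_iff.mp ⟨x, hx0, hABx⟩
    simp [this, hd]
  · obtain ⟨S, hSH, hS2⟩ : ∃ S : Matrix (Fin k) (Fin k) ℂ, S.IsHermitian ∧ S * S = A :=
      by open scoped MatrixOrder in exact ⟨CFC.sqrt A, (CFC.sqrt_nonneg A).posSemidef.1, CFC.sqrt_mul_sqrt_self A hA.nonneg⟩
    have hdS : IsUnit S.det := by
      rw [isUnit_iff_ne_zero]
      intro h0
      exact hd (by rw [← hS2, Matrix.det_mul, h0, zero_mul])
    have hinv1 : S⁻¹ * S = 1 := Matrix.nonsing_inv_mul S hdS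
    have hinv2 : S * S⁻¹ = 1 := Matrix.mul_nonsing_inv S hdS
    have hSinvH : (S⁻¹)ᴴ = S⁻¹ := by
      rw [Matrix.conjTranspose_nonsing_inv, hSH.eq]
    set C := S⁻¹ * B * S⁻¹ with hCdef
    have hAid : S⁻¹ * A * S⁻¹ = 1 := by
      rw [← hS2, show S⁻¹ * (S * S) * S⁻¹ = (S⁻¹ * S) * (S * S⁻¹) by
        simp only [Matrix.mul_assoc], hinv1, hinv2, one_mul]
    have hC1 : 1 - C = S⁻¹ * (A - B) * S⁻¹ := by
      rw [Matrix.mul_sub, Matrix.sub_mul, hAid]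
    have hC2 : 1 + C = S⁻¹ * (A + B) * S⁻¹ := by
      rw [Matrix.mul_add, Matrix.add_mul, hAid]
    have hC1p : (1 - C).PosSemidef := by
      rw [hC1]; nth_rewrite 1 [← hSinvH]
      exact h1.conjTranspose_mul_mul_same _
    have hC2p : (1 + C).PosSemidef := by
      rw [hC2]; nth_rewrite 1 [← hSinvH]
      exact h2.conjTranspose_mul_mul_same _
    have hCH : C.IsHermitian := by
      have ha : (1 - C).IsHermitian := hC1p.1
      have h2' : C = 1 - (1 - C) := by rw [sub_sub_cancel]
      rw [h2']
      exact Matrix.isHermitian_one.sub ha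
    have hB : B = S * C * S := by
      rw [hCdef, show S * (S⁻¹ * B * S⁻¹) * S = (S * S⁻¹) * B * (S⁻¹ * S) by
        simp only [Matrix.mul_assoc], hinv1, hinv2, one_mul, mul_one]
    have hAdet : ‖A.det‖ = ‖S.det‖ * ‖S.det‖ := by
      rw [← norm_mul, ← Matrix.det_mul, hS2]
    rw [hB, Matrix.det_mul, Matrix.det_mul, norm_mul, norm_mul, hAdet]
    have h0 : (0:ℝ) ≤ ‖S.det‖ := norm_nonneg _
    have hC1' := abs_det_le_one hCH hC1p hC2p
    nlinarith

private lemma exists_topk {n : ℕ} (d : Fin n → ℝ) (k : ℕ) (hk : k ≤ n) :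
    ∃ t : Finset (Fin n), t.card = k ∧ ∀ i ∈ t, ∀ j ∉ t, d j ≤ d i := by
  induction k with
  | zero => exact ⟨∅, rfl, by simp⟩
  | succ m ih =>
    obtain ⟨t, htc, htp⟩ := ih (Nat.le_of_succ_le hk)
    have hne : tᶜ.Nonempty := by
      rw [← Finset.card_pos, Finset.card_compl, htc, Fintype.card_fin]
      omega
    obtain ⟨j0, hj0mem, hj0max⟩ := Finset.exists_max_image tᶜ d hne
    have hj0t : j0 ∉ t := Finset.mem_compl.mp hj0mem
    refine ⟨insert j0 t, ?_, ?_⟩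
    · rw [Finset.card_insert_of_notMem hj0t, htc]
    · intro i hi j hj
      have hjt : j ∉ t := fun h => hj (Finset.mem_insert_of_mem h)
      rcases Finset.mem_insert.mp hi with rfl | hit
      · exact hj0max j (Finset.mem_compl.mpr hjt)
      · exact htp i hit j hjt

set_option maxHeartbeats 1600000 in
open Matrix in
private lemma core_bound {n k : ℕ} (M : Matrix (Fin n) (Fin k) ℂ) (hM : Mᴴ * M = 1)
    (d : Fin n → ℝ) (hd : ∀ i, 0 ≤ d i) (t : Finset (Fin n)) (htk : t.card = k)
    {c : ℝ} (hc : 0 < c) (hct : ∀ i ∈ t, c ≤ d i) (htc : ∀ j ∉ t, d j ≤ c) :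
    ‖(Mᴴ * Matrix.diagonal (fun i => (d i : ℂ)) * M).det‖ ≤ ∏ i ∈ t, d i := by
  classical
  set g : Fin n → ℝ := fun i => Real.sqrt (if i ∈ t then (d i - c)/c else 0) with hgdef
  have hg2 : ∀ i, g i ^ 2 = if i ∈ t then (d i - c)/c else 0 := by
    intro i
    rw [hgdef]
    refine Real.sq_sqrt ?_
    split_ifs with h
    · exact div_nonneg (sub_nonneg.mpr (hct i h)) hc.le
    · exact le_refl 0
  set G : Matrix (Fin n) (Fin n) ℂ := Matrix.diagonal (fun i => (g i : ℂ)) with hGdef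
  have hGH : Gᴴ = G := by
    rw [hGdef, Matrix.diagonal_conjTranspose]
    refine congrArg Matrix.diagonal ?_
    funext i
    simp [Pi.star_apply, Complex.conj_ofReal]
  -- the capped diagonal
  have hdd : Matrix.diagonal (fun i => ((if i ∈ t then d i else c : ℝ) : ℂ))
      = (c:ℂ) • (1 + G * G) := by
    rw [hGdef, Matrix.diagonal_mul_diagonal, ← Matrix.diagonal_one, Matrix.diagonal_add,
      ← Matrix.diagonal_smul]
    refine congrArg Matrix.diagonal ?_
    funext i
    have := hg2 i
    have hgg : (g i : ℂ) * (g i : ℂ) = ((g i ^ 2 : ℝ) : ℂ) := by push_cast; ring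
    simp only [Pi.smul_apply, Pi.add_apply, Pi.one_apply, smul_eq_mul]
    rw [hgg, this]
    split_ifs with h
    · push_cast
      field_simp
      ring
    · push_cast
      simp
  have key : Mᴴ * Matrix.diagonal (fun i => ((if i ∈ t then d i else c : ℝ) : ℂ)) * M
      = (c:ℂ) • (1 + (Mᴴ * G) * (G * M)) := by
    rw [hdd, Matrix.mul_smul, Matrix.smul_mul]
    congr 1
    simp only [Matrix.mul_add, Matrix.add_mul, Matrix.mul_one, hM, Matrix.mul_assoc]
  -- step 1 : monotonicity from d to the capped diagonal
  have hDpsd : (Matrix.diagonal (fun i => (d i : ℂ))).PosSemidef :=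
    Matrix.posSemidef_diagonal_iff.mpr fun i => by
      exact_mod_cast Complex.zero_le_real.mpr (hd i)
  have hP : (Mᴴ * Matrix.diagonal (fun i => (d i : ℂ)) * M).PosSemidef :=
    hDpsd.conjTranspose_mul_mul_same M
  have step1 : ‖(Mᴴ * Matrix.diagonal (fun i => (d i : ℂ)) * M).det‖
      ≤ ‖(Mᴴ * Matrix.diagonal (fun i => ((if i ∈ t then d i else c : ℝ) : ℂ)) * M).det‖ := by
    refine abs_det_mono hP ?_
    have hsub : Mᴴ * Matrix.diagonal (fun i => ((if i ∈ t then d i else c : ℝ) : ℂ)) * M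
        - Mᴴ * Matrix.diagonal (fun i => (d i : ℂ)) * M
        = Mᴴ * Matrix.diagonal (fun i => (((if i ∈ t then d i else c) - d i : ℝ) : ℂ)) * M := by
      rw [show (fun i => (((if i ∈ t then d i else c) - d i : ℝ) : ℂ))
          = fun i => ((if i ∈ t then d i else c : ℝ) : ℂ) - ((d i : ℝ) : ℂ) by
        funext i; push_cast; ring]
      rw [← Matrix.diagonal_sub, Matrix.mul_sub, Matrix.sub_mul]
    rw [hsub]
    refine (Matrix.posSemidef_diagonal_iff.mpr fun i => ?_).conjTranspose_mul_mul_same M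
    refine Complex.zero_le_real.mpr ?_
    split_ifs with h
    · simp
    · simpa using htc i h
  -- step 2 : compute
  have step2 : ‖(Mᴴ * Matrix.diagonal (fun i => ((if i ∈ t then d i else c : ℝ) : ℂ)) * M).det‖
      = c ^ k * ‖(1 + (G * M) * (Mᴴ * G)).det‖ := by
    rw [key, Matrix.det_smul, norm_mul, norm_pow, Complex.norm_real, Real.norm_eq_abs, abs_of_pos hc,
      Fintype.card_fin, Matrix.det_one_add_mul_comm]
  -- step 3 : compression bound
  have hGMH : (G * M)ᴴ = Mᴴ * G := by rw [Matrix.conjTranspose_mul, hGH]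
  have hPP : (M * Mᴴ) * (M * Mᴴ) = M * Mᴴ := by
    rw [Matrix.mul_assoc M Mᴴ (M * Mᴴ), ← Matrix.mul_assoc Mᴴ M Mᴴ, hM, Matrix.one_mul]
  have h1MP : (1 - M * Mᴴ).PosSemidef := by
    have e : (1 - M * Mᴴ)ᴴ * (1 - M * Mᴴ) = 1 - M * Mᴴ := by
      rw [Matrix.conjTranspose_sub, Matrix.conjTranspose_one, Matrix.conjTranspose_mul,
        Matrix.conjTranspose_conjTranspose]
      rw [Matrix.sub_mul, Matrix.one_mul, Matrix.mul_sub, Matrix.mul_one, hPP]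
      abel
    have := Matrix.posSemidef_conjTranspose_mul_self (1 - M * Mᴴ)
    rwa [e] at this
  have step3 : ‖(1 + (G * M) * (Mᴴ * G)).det‖ ≤ ‖(1 + G * G).det‖ := by
    refine abs_det_mono ?_ ?_
    · refine Matrix.PosSemidef.add Matrix.PosSemidef.one ?_
      have := Matrix.posSemidef_self_mul_conjTranspose (G * M)
      rwa [hGMH] at this
    · have hdiff2 : (1 + G * G) - (1 + (G * M) * (Mᴴ * G)) = Gᴴ * (1 - M * Mᴴ) * G := by
        rw [hGH]
        noncomm_ring
        simp only [Matrix.mul_assoc]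
      rw [hdiff2]
      exact h1MP.conjTranspose_mul_mul_same G
  -- step 4 : compute the diagonal determinant
  have hdiag1 : (1 : Matrix (Fin n) (Fin n) ℂ) + G * G
      = Matrix.diagonal (fun i => ((1 + g i ^ 2 : ℝ) : ℂ)) := by
    rw [hGdef, Matrix.diagonal_mul_diagonal, ← Matrix.diagonal_one, Matrix.diagonal_add]
    refine congrArg Matrix.diagonal ?_
    funext i
    try simp only [Pi.add_apply, Pi.one_apply]
    push_cast
    ring
  have step4 : ‖(1 + G * G).det‖ = ∏ i ∈ t, (d i / c) := by
    rw [hdiag1, Matrix.det_diagonal, norm_prod]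
    have habs : ∀ i : Fin n, ‖((1 + g i ^ 2 : ℝ) : ℂ)‖ = 1 + g i ^ 2 := by
      intro i
      rw [Complex.norm_real, Real.norm_eq_abs, abs_of_nonneg (by positivity)]
    rw [show (fun i => ‖((1 + g i ^ 2 : ℝ) : ℂ)‖) = fun i => 1 + g i ^ 2 by
      funext i; exact habs i]
    have hps : ∏ i ∈ t, (1 + g i ^ 2) = ∏ i : Fin n, (1 + g i ^ 2) :=
      Finset.prod_subset (Finset.subset_univ t) (fun x _ hx => by rw [hg2 x, if_neg hx]; norm_num)
    rw [← hps]
    refine Finset.prod_congr rfl fun i hi => ?_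
    rw [hg2 i, if_pos hi]
    have hci := hct i hi
    have hc0 : c ≠ 0 := hc.ne'
    field_simp
    ring
  -- assemble
  have hck : (0:ℝ) < c ^ k := pow_pos hc k
  have hfin : c ^ k * ∏ i ∈ t, (d i / c) = ∏ i ∈ t, d i := by
    rw [Finset.prod_div_distrib, Finset.prod_const, htk]
    have hc0 : c ^ k ≠ 0 := (pow_pos hc k).ne'
    field_simp
  refine le_trans step1 ?_
  rw [step2]
  refine le_trans (mul_le_mul_of_nonneg_left step3 hck.le) ?_
  rw [step4]
  exact le_of_eq hfin

open Matrix in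
private lemma exists_bound {n k : ℕ} (M : Matrix (Fin n) (Fin k) ℂ) (hM : Mᴴ * M = 1)
    (d : Fin n → ℝ) (hd : ∀ i, 0 ≤ d i) :
    ∃ t : Finset (Fin n), t.card = k ∧
      ‖(Mᴴ * Matrix.diagonal (fun i => (d i : ℂ)) * M).det‖ ≤ ∏ i ∈ t, d i := by
  have hkn : k ≤ n := by
    have h1 : (1 : Matrix (Fin k) (Fin k) ℂ).rank = k := by
      rw [Matrix.rank_one, Fintype.card_fin]
    calc k = (Mᴴ * M).rank := by rw [hM, h1]
      _ ≤ M.rank := Matrix.rank_mul_le_right _ _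
      _ ≤ n := by simpa using M.rank_le_card_height
  obtain ⟨t, htk, htop⟩ := exists_topk d k hkn
  rcases Nat.eq_zero_or_pos k with hk0 | hkpos
  · subst hk0
    rw [Finset.card_eq_zero] at htk
    subst htk
    refine ⟨∅, rfl, ?_⟩
    rw [Matrix.det_isEmpty]
    simp
  · have htne : t.Nonempty := Finset.card_pos.mp (htk ▸ hkpos)
    refine ⟨t, htk, ?_⟩
    have keyε : ∀ ε : ℝ, 0 < ε →
        ‖(Mᴴ * Matrix.diagonal (fun i => (d i : ℂ)) * M).det‖
          ≤ ∏ i ∈ t, (d i + ε) := by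
      intro ε hε
      set dε : Fin n → ℝ := fun i => d i + ε with hdedef
      have hmono : ‖(Mᴴ * Matrix.diagonal (fun i => (d i : ℂ)) * M).det‖
          ≤ ‖(Mᴴ * Matrix.diagonal (fun i => (dε i : ℂ)) * M).det‖ := by
        refine abs_det_mono ((Matrix.posSemidef_diagonal_iff.mpr fun i =>
          Complex.zero_le_real.mpr (hd i)).conjTranspose_mul_mul_same M) ?_
        have hsub : Mᴴ * Matrix.diagonal (fun i => (dε i : ℂ)) * M
            - Mᴴ * Matrix.diagonal (fun i => (d i : ℂ)) * M
            = Mᴴ * Matrix.diagonal (fun i => ((dε i - d i : ℝ) : ℂ)) * M := by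
          rw [show (fun i => ((dε i - d i : ℝ) : ℂ))
              = fun i => ((dε i : ℝ) : ℂ) - ((d i : ℝ) : ℂ) by funext i; push_cast; ring]
          rw [← Matrix.diagonal_sub, Matrix.mul_sub, Matrix.sub_mul]
        rw [hsub]
        refine (Matrix.posSemidef_diagonal_iff.mpr fun i =>
          Complex.zero_le_real.mpr ?_).conjTranspose_mul_mul_same M
        rw [hdedef]
        simp [hε.le]
      -- the min of dε over t
      obtain ⟨i0, hi0t, hi0min⟩ : ∃ i0 ∈ t, ∀ i ∈ t, dε i0 ≤ dε i := by
        obtain ⟨i0, hi0t, hmin⟩ := Finset.exists_min_image t dε htne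
        exact ⟨i0, hi0t, hmin⟩
      set c : ℝ := dε i0 with hcdef
      have hc : 0 < c := by rw [hcdef, hdedef]; have := hd i0; simp; linarith
      have hbound := core_bound M hM dε (fun i => by
          have := hd i; rw [hdedef]; simp; linarith) t htk hc
        (fun i hi => hi0min i hi)
        (fun j hj => by
          have h1 : d j ≤ d i0 := htop i0 hi0t j hj
          rw [hcdef, hdedef]; simp; linarith)
      calc ‖(Mᴴ * Matrix.diagonal (fun i => (d i : ℂ)) * M).det‖
          ≤ ‖(Mᴴ * Matrix.diagonal (fun i => (dε i : ℂ)) * M).det‖ := hmono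
        _ ≤ ∏ i ∈ t, dε i := hbound
    -- ε → 0 limit
    have htend : Filter.Tendsto (fun ε : ℝ => ∏ i ∈ t, (d i + ε))
        (nhdsWithin 0 (Set.Ioi 0)) (nhds (∏ i ∈ t, d i)) := by
      have hcont : Continuous fun ε : ℝ => ∏ i ∈ t, (d i + ε) := by
        exact continuous_finset_prod t fun i _ => continuous_const.add continuous_id
      have h0 := hcont.tendsto 0
      simp only [add_zero] at h0
      exact h0.mono_left nhdsWithin_le_nhds
    refine ge_of_tendsto htend ?_
    filter_upwards [self_mem_nhdsWithin] with ε hε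
    exact keyε ε hε

open Matrix in
/-- entrywise computation for the selection matrix. -/
private lemma sel_comp {n k : ℕ} (e : Fin k → Fin n) (he : Function.Injective e)
    (X : Matrix (Fin n) (Fin n) ℂ) :
    ((Matrix.of (fun i a => if e a = i then (1:ℂ) else 0) : Matrix (Fin n) (Fin k) ℂ))ᴴ * X *
      (Matrix.of (fun i a => if e a = i then (1:ℂ) else 0) : Matrix (Fin n) (Fin k) ℂ)
      = Matrix.of (fun a b => X (e a) (e b)) := by
  ext a b
  simp only [Matrix.mul_apply, Matrix.conjTranspose_apply, Matrix.of_apply]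
  calc ∑ j : Fin n, (∑ i : Fin n, star (if e a = i then (1:ℂ) else 0) * X i j)
          * (if e b = j then (1:ℂ) else 0)
      = ∑ i : Fin n, star (if e a = i then (1:ℂ) else 0) * X i (e b) := by
        rw [Finset.sum_eq_single (e b)] <;> simp +contextual [eq_comm]
    _ = X (e a) (e b) := by
        rw [Finset.sum_eq_single (e a)] <;> simp +contextual [eq_comm]

open Matrix

/-- If `−A ≤ B ≤ A` with `A ⪰ 0` and `B` Hermitian, then `B` is logarithmically
submajorised by `A`: for every set `s` of indices there is a set `t` of the same
cardinality such that the product of the corresponding singular values of `B`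
(absolute values of eigenvalues) is bounded by the product of the eigenvalues
of `A` over `t`; i.e. products of `k` largest singular values compare. -/
theorem stmt_5 {n : ℕ} (A B : Matrix (Fin n) (Fin n) ℂ)
    (hA : A.PosSemidef) (hB : B.IsHermitian)
    (h1 : (A - B).PosSemidef) (h2 : (A + B).PosSemidef) :
    ∀ s : Finset (Fin n), ∃ t : Finset (Fin n), t.card = s.card ∧
      ∏ i ∈ s, |hB.eigenvalues i| ≤ ∏ i ∈ t, hA.1.eigenvalues i := by
  intro s
  classical
  obtain ⟨k, hk⟩ : ∃ k, s.card = k := ⟨s.card, rfl⟩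
  set e : Fin k → Fin n := fun a => s.orderEmbOfFin hk a with hedef
  have heinj : Function.Injective e := fun a b hab => (s.orderEmbOfFin hk).injective hab
  have hemem : ∀ a, e a ∈ s := fun a => s.orderEmbOfFin_mem hk a
  have hsmap : s = Finset.univ.map ⟨e, heinj⟩ := by
    refine (Finset.eq_of_subset_of_card_le ?_ ?_).symm
    · intro x hx
      obtain ⟨a, _, rfl⟩ := Finset.mem_map.mp hx
      exact hemem a
    · rw [Finset.card_map, Finset.card_univ, Fintype.card_fin, hk]
  set J : Matrix (Fin n) (Fin k) ℂ := Matrix.of (fun i a => if e a = i then 1 else 0)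
    with hJdef
  have F1 : ∀ X : Matrix (Fin n) (Fin n) ℂ,
      Jᴴ * X * J = Matrix.of (fun a b => X (e a) (e b)) := fun X => sel_comp e heinj X
  have hJJ : Jᴴ * J = 1 := by
    have h0 := F1 1
    rw [Matrix.mul_one] at h0
    rw [h0]
    ext a b
    by_cases hab : a = b
    · subst hab; simp [Matrix.one_apply]
    · have : ¬ e a = e b := fun h => hab (heinj h)
      simp [Matrix.one_apply, hab, this]
  have hdiagJ : ∀ f : Fin n → ℂ, Jᴴ * Matrix.diagonal f * J
      = Matrix.diagonal (fun a => f (e a)) := by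
    intro f
    rw [F1]
    ext a b
    by_cases hab : a = b
    · subst hab; simp [Matrix.diagonal_apply_eq]
    · rw [Matrix.of_apply, Matrix.diagonal_apply_ne _ hab,
        Matrix.diagonal_apply_ne _ (fun h => hab (heinj h))]
  -- eigenvector unitary of B
  set U : Matrix (Fin n) (Fin n) ℂ := (hB.eigenvectorUnitary : Matrix (Fin n) (Fin n) ℂ)
    with hUdef
  have hU1 : star U * U = 1 := Unitary.coe_star_mul_self hB.eigenvectorUnitary
  set V : Matrix (Fin n) (Fin k) ℂ := U * J with hVdef
  have hVH : Vᴴ = Jᴴ * star U := by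
    rw [hVdef, Matrix.conjTranspose_mul, Matrix.star_eq_conjTranspose]
  have hVV : Vᴴ * V = 1 := by
    rw [hVH, hVdef, show Jᴴ * star U * (U * J) = Jᴴ * (star U * U) * J by
      simp only [Matrix.mul_assoc], hU1, Matrix.mul_one, hJJ]
  -- compression of B is diagonal
  have hcoe : (RCLike.ofReal ∘ hB.eigenvalues : Fin n → ℂ)
      = fun i => ((hB.eigenvalues i : ℝ) : ℂ) := by
    funext i
    simp [RCLike.ofReal]
  have hBV : Vᴴ * B * V = Matrix.diagonal (fun a => ((hB.eigenvalues (e a) : ℝ) : ℂ)) := by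
    have hassoc : Vᴴ * B * V = Jᴴ * (star U * B * U) * J := by
      rw [hVH, hVdef]
      simp only [Matrix.mul_assoc]
    have hdg : star U * B * U = Matrix.diagonal (RCLike.ofReal ∘ hB.eigenvalues) := by
      rw [← hB.conjStarAlgAut_star_eigenvectorUnitary, Unitary.conjStarAlgAut_star_apply]
    rw [hassoc, hdg, hcoe, hdiagJ]
  -- PSD compressions
  have hA' : (Vᴴ * A * V).PosSemidef := hA.conjTranspose_mul_mul_same V
  have hsub1 : Vᴴ * A * V - Vᴴ * B * V = Vᴴ * (A - B) * V := by
    rw [Matrix.mul_sub, Matrix.sub_mul]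
  have hsub2 : Vᴴ * A * V + Vᴴ * B * V = Vᴴ * (A + B) * V := by
    rw [Matrix.mul_add, Matrix.add_mul]
  have hdet1 : ‖(Vᴴ * B * V).det‖ ≤ ‖(Vᴴ * A * V).det‖ := by
    refine abs_det_le_abs_det hA' ?_ ?_
    · rw [hsub1]; exact h1.conjTranspose_mul_mul_same V
    · rw [hsub2]; exact h2.conjTranspose_mul_mul_same V
  -- LHS is the product over s
  have hlhs : ‖(Vᴴ * B * V).det‖ = ∏ i ∈ s, |hB.eigenvalues i| := by
    rw [hBV, Matrix.det_diagonal, norm_prod]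
    rw [show (fun a => ‖((hB.eigenvalues (e a) : ℝ) : ℂ)‖)
        = fun a => |hB.eigenvalues (e a)| by
      funext a; rw [Complex.norm_real, Real.norm_eq_abs]]
    conv_rhs => rw [hsmap, Finset.prod_map]
    rfl
  -- A side : isometry into the eigenbasis of A
  set W : Matrix (Fin n) (Fin n) ℂ := (hA.1.eigenvectorUnitary : Matrix (Fin n) (Fin n) ℂ)
    with hWdef
  have hW2 : W * star W = 1 := Unitary.coe_mul_star_self hA.1.eigenvectorUnitary
  set Mm : Matrix (Fin n) (Fin k) ℂ := star W * V with hMmdef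
  have hMmH : Mmᴴ = Vᴴ * W := by
    rw [hMmdef, Matrix.conjTranspose_mul, ← Matrix.star_eq_conjTranspose, star_star]
  have hMM : Mmᴴ * Mm = 1 := by
    rw [hMmH, hMmdef, show Vᴴ * W * (star W * V) = Vᴴ * (W * star W) * V by
      simp only [Matrix.mul_assoc], hW2, Matrix.mul_one, hVV]
  have hcoeA : (RCLike.ofReal ∘ hA.1.eigenvalues : Fin n → ℂ)
      = fun i => ((hA.1.eigenvalues i : ℝ) : ℂ) := by
    funext i
    simp [RCLike.ofReal]
  have hAeq : Vᴴ * A * V = Mmᴴ * Matrix.diagonal (fun i => ((hA.1.eigenvalues i : ℝ) : ℂ)) * Mm := by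
    conv_lhs => rw [hA.1.spectral_theorem]; simp only [Unitary.conjStarAlgAut_apply, Unitary.coe_star]
    rw [hMmH, hMmdef, hcoeA]
    simp only [Matrix.mul_assoc]
    rfl
  obtain ⟨t, htk, hb⟩ := exists_bound Mm hMM hA.1.eigenvalues hA.eigenvalues_nonneg
  refine ⟨t, by rw [htk, hk], ?_⟩
  calc ∏ i ∈ s, |hB.eigenvalues i| = ‖(Vᴴ * B * V).det‖ := hlhs.symm
    _ ≤ ‖(Vᴴ * A * V).det‖ := hdet1
    _ ≤ ∏ i ∈ t, hA.1.eigenvalues i := by rw [hAeq]; exact hb
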